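/- arXiv:2002.01129 — 2 statements merged into one kernel-verified Lean document; each statement's English description precedes it below -/
import Mathlib

section
/- If in addition the μ̃_i are pairwise uncorrelated, then the estimator τ̂² = (1/(N−1))∑_i (μ̃_i − ν̂)² − (1/N)∑_i σ̃_i² is unbiased: E[τ̂²] = τ². -/
open MeasureTheory ProbabilityTheory

lemma sum_sq_dev {n : ℕ} (hn : (n:ℝ) ≠ 0) (y : Fin n → ℝ) :
    ∑ i, (y i - (n:ℝ)⁻¹ * ∑ j, y j)^2
      = ∑ i, (y i)^2 - (n:ℝ)⁻¹ * ∑ i, ∑ j, y i * y j := by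
  have hT : ∑ i, ∑ j, y i * y j = (∑ i, y i) * (∑ j, y j) := by
    rw [Finset.sum_mul_sum]
  set T := ∑ j, y j with hTdef
  have : ∑ i, (y i - (n:ℝ)⁻¹ * T)^2
      = ∑ i, ((y i)^2 - 2 * (n:ℝ)⁻¹ * T * y i + ((n:ℝ)⁻¹ * T)^2) := by
    apply Finset.sum_congr rfl; intro i _; ring
  rw [this, Finset.sum_add_distrib, Finset.sum_sub_distrib, Finset.sum_const,
    ← Finset.mul_sum, Finset.card_univ, Fintype.card_fin, hT]
  field_simp
  rw [← hTdef]
  have hnn : (n:ℝ)^2 * ((n:ℝ)⁻¹)^2 = 1 := by rw [← mul_pow, mul_inv_cancel₀ hn, one_pow]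
  linear_combination T^2 * hnn

/-- Unbiasedness: if the `μ̃ᵢ` are pairwise uncorrelated, the meta-prior variance
estimator satisfies `E[τ̂²] = τ²`. -/
theorem meta_prior_estimator_unbiased
    {Ω : Type*} [MeasurableSpace Ω] (μ : Measure Ω) [IsProbabilityMeasure μ]
    (N : ℕ) (hN : 2 ≤ N) (X S : Fin N → Ω → ℝ) (ν τsq : ℝ)
    (hX2 : ∀ i, MemLp (X i) 2 μ) (hS : ∀ i, Integrable (S i) μ)
    (hmean : ∀ i, ∫ ω, X i ω ∂μ = ν)
    (hvar : ∀ i, variance (X i) μ = τsq + ∫ ω, S i ω ∂μ)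
    (huncorr : ∀ i j, i ≠ j → ∫ ω, (X i ω - ν) * (X j ω - ν) ∂μ = 0) :
    ∫ ω, (((N : ℝ) - 1)⁻¹ * ∑ i, (X i ω - (N : ℝ)⁻¹ * ∑ j, X j ω) ^ 2
          - (N : ℝ)⁻¹ * ∑ i, S i ω) ∂μ = τsq := by
  have hN0 : (N : ℝ) ≠ 0 := by positivity
  have hN1 : (N : ℝ) - 1 ≠ 0 := by
    have : (2:ℝ) ≤ N := by exact_mod_cast hN
    intro h; nlinarith
  -- centered variables
  set Y : Fin N → Ω → ℝ := fun i ω => X i ω - ν with hYdef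
  have hY2 : ∀ i, MemLp (Y i) 2 μ := fun i => (hX2 i).sub (memLp_const ν)
  have hYsq : ∀ i, Integrable (fun ω => (Y i ω)^2) μ := fun i => (hY2 i).integrable_sq
  have hYmul : ∀ i j, Integrable (fun ω => Y i ω * Y j ω) μ := by
    intro i j
    have h1 : Integrable (fun ω => (Y i ω + Y j ω)^2) μ := ((hY2 i).add (hY2 j)).integrable_sq
    have := ((h1.sub (hYsq i)).sub (hYsq j)).div_const 2
    refine this.congr (Filter.Eventually.of_forall fun ω => ?_)
    simp only [Pi.sub_apply]
    ring
  -- pointwise rewrite of the integrand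
  have hpt : ∀ ω,
      (((N : ℝ) - 1)⁻¹ * ∑ i, (X i ω - (N : ℝ)⁻¹ * ∑ j, X j ω) ^ 2
          - (N : ℝ)⁻¹ * ∑ i, S i ω)
      = ((N : ℝ) - 1)⁻¹ * ∑ i, (Y i ω)^2
        - ((N : ℝ) - 1)⁻¹ * ((N : ℝ)⁻¹ * ∑ i, ∑ j, Y i ω * Y j ω)
        - (N : ℝ)⁻¹ * ∑ i, S i ω := by
    intro ω
    have h1 : ∀ i, X i ω - (N : ℝ)⁻¹ * ∑ j, X j ω
        = Y i ω - (N : ℝ)⁻¹ * ∑ j, Y j ω := by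
      intro i
      simp only [hYdef, Finset.sum_sub_distrib, Finset.sum_const, Finset.card_univ,
        Fintype.card_fin, nsmul_eq_mul]
      field_simp
      ring
    simp_rw [h1]
    rw [sum_sq_dev hN0]
    ring
  simp_rw [hpt]
  -- integrate term by term
  have hI1 : Integrable (fun ω => ((N : ℝ) - 1)⁻¹ * ∑ i, (Y i ω)^2) μ :=
    (integrable_finset_sum _ fun i _ => hYsq i).const_mul _
  have hI2 : Integrable (fun ω => ((N : ℝ) - 1)⁻¹ * ((N : ℝ)⁻¹ * ∑ i, ∑ j, Y i ω * Y j ω)) μ :=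
    ((integrable_finset_sum _ fun i _ =>
      integrable_finset_sum _ fun j _ => hYmul i j).const_mul _).const_mul _
  have hI3 : Integrable (fun ω => (N : ℝ)⁻¹ * ∑ i, S i ω) μ :=
    (integrable_finset_sum _ fun i _ => hS i).const_mul _
  have hI12 : Integrable (fun ω => ((N : ℝ) - 1)⁻¹ * ∑ i, (Y i ω)^2
      - ((N : ℝ) - 1)⁻¹ * ((N : ℝ)⁻¹ * ∑ i, ∑ j, Y i ω * Y j ω)) μ := hI1.sub hI2
  rw [integral_sub hI12 hI3, integral_sub hI1 hI2]
  simp only [integral_const_mul]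
  rw [integral_finset_sum _ fun i _ => hYsq i,
    integral_finset_sum _ (fun i _ => integrable_finset_sum _ fun j _ => hYmul i j),
    integral_finset_sum _ fun i _ => hS i]
  have hinner : ∀ i : Fin N, ∫ a, ∑ j, Y i a * Y j a ∂μ = ∑ j, ∫ a, Y i a * Y j a ∂μ :=
    fun i => integral_finset_sum _ fun j _ => hYmul i j
  simp_rw [hinner]
  -- values of the integrals
  have hYsqval : ∀ i, ∫ ω, (Y i ω)^2 ∂μ = τsq + ∫ ω, S i ω ∂μ := by
    intro i
    have hv := variance_eq_sub (hX2 i)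
    rw [hmean i] at hv
    simp only [Pi.pow_apply] at hv
    have hXsq := (hX2 i).integrable_sq
    have hXint := (hX2 i).integrable one_le_two
    have h1 : Integrable (fun ω => X i ω ^ 2 - 2 * ν * X i ω) μ :=
      hXsq.sub (hXint.const_mul _)
    have : ∫ ω, (Y i ω)^2 ∂μ = (∫ ω, (X i ω)^2 ∂μ) - 2 * ν * ν + ν^2 := by
      have hexp : ∀ ω, (Y i ω)^2 = X i ω ^ 2 - 2 * ν * X i ω + ν^2 := fun ω => by
        simp only [hYdef]; ring
      simp_rw [hexp]
      rw [integral_add h1 (integrable_const _), integral_sub hXsq (hXint.const_mul _),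
        integral_const_mul, integral_const, hmean i]
      simp
    rw [this, ← hvar i, hv]
    ring
  have hdiag : ∀ i : Fin N, ∑ j, ∫ ω, Y i ω * Y j ω ∂μ = τsq + ∫ ω, S i ω ∂μ := by
    intro i
    rw [Finset.sum_eq_single_of_mem i (Finset.mem_univ i)]
    · have : ∀ ω, Y i ω * Y i ω = (Y i ω)^2 := fun ω => by ring
      simp_rw [this]; exact hYsqval i
    · intro j _ hj
      exact huncorr i j (Ne.symm hj)
  simp_rw [hYsqval, hdiag]
  rw [Finset.sum_add_distrib, Finset.sum_const, Finset.card_univ, Fintype.card_fin,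
    nsmul_eq_mul]
  field_simp
  ring
end

section
/- Under the assumptions that the families (μ̃_i), (μ̃_i²), and (σ̃_i²) are each sequences of independent random variables with uniformly bounded variances, common structure E[μ̃_i] = ν, Var[μ̃_i] = τ² + E[σ̃_i²], the meta-prior variance estimator τ̂²_N = (N/(N−1))[(1/N)∑_i μ̃_i² − ((1/N)∑_i μ̃_i)²] − (1/N)∑_i σ̃_i² converges almost surely to τ² as N → ∞. -/
open MeasureTheory ProbabilityTheory Filter


lemma aux_summable_inv_sq : Summable (fun n : ℕ => 1 / ((n : ℝ) + 1) ^ 2) := by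
  have h := Real.summable_one_div_nat_pow.mpr (le_refl 2)
  have := (summable_nat_add_iff 1).mpr h
  refine this.congr fun n => ?_
  push_cast
  ring

lemma aux_tendsto_zero_of_cheb {Ω : Type*} [MeasurableSpace Ω] (μ : Measure Ω)
    [IsProbabilityMeasure μ] (R : ℕ → Ω → ℝ) (K : ℝ) (hK : 0 ≤ K)
    (hcheb : ∀ c : ℝ, 0 < c → ∀ n : ℕ, 1 ≤ n →
      μ {ω | c ≤ |R n ω|} ≤ ENNReal.ofReal (K / (c ^ 2 * (n : ℝ) ^ 2))) :
    ∀ᵐ ω ∂μ, Tendsto (fun n => R n ω) atTop (nhds 0) := by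
  have key : ∀ k : ℕ, ∀ᵐ ω ∂μ, ∀ᶠ n in atTop, |R n ω| < 1 / ((k : ℝ) + 1) := by
    intro k
    set c : ℝ := 1 / ((k : ℝ) + 1) with hc
    have hcpos : 0 < c := by positivity
    have hsum : (∑' n : ℕ, μ {ω | c ≤ |R (n + 1) ω|}) ≠ ⊤ := by
      have hb : ∀ n : ℕ, μ {ω | c ≤ |R (n + 1) ω|}
          ≤ ENNReal.ofReal (K / c ^ 2 * (1 / ((n : ℝ) + 1) ^ 2)) := by
        intro n
        refine (hcheb c hcpos (n + 1) (Nat.le_add_left 1 n)).trans_eq ?_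
        congr 1
        push_cast
        field_simp
      have hsummable : Summable (fun n : ℕ => K / c ^ 2 * (1 / ((n : ℝ) + 1) ^ 2)) :=
        aux_summable_inv_sq.mul_left _
      have hnonneg : ∀ n : ℕ, 0 ≤ K / c ^ 2 * (1 / ((n : ℝ) + 1) ^ 2) := by
        intro n; positivity
      have hle : (∑' n : ℕ, μ {ω | c ≤ |R (n + 1) ω|})
          ≤ ENNReal.ofReal (∑' n : ℕ, K / c ^ 2 * (1 / ((n : ℝ) + 1) ^ 2)) := by
        rw [ENNReal.ofReal_tsum_of_nonneg hnonneg hsummable]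
        exact ENNReal.tsum_le_tsum hb
      exact ne_top_of_le_ne_top ENNReal.ofReal_ne_top hle
    filter_upwards [ae_eventually_notMem hsum] with ω hω
    rw [eventually_atTop] at hω ⊢
    obtain ⟨N, hN⟩ := hω
    refine ⟨N + 1, fun n hn => ?_⟩
    have h1 : n - 1 ≥ N := by omega
    have h2 := hN (n - 1) h1
    have h3 : n - 1 + 1 = n := by omega
    rw [h3] at h2
    simpa [Set.mem_setOf_eq, not_le] using h2
  filter_upwards [ae_all_iff.2 key] with ω hω
  rw [Metric.tendsto_atTop]
  intro e he
  obtain ⟨k, hk⟩ := exists_nat_one_div_lt he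
  obtain ⟨N, hN⟩ := eventually_atTop.1 (hω k)
  refine ⟨N, fun n hn => ?_⟩
  rw [Real.dist_eq, sub_zero]
  exact lt_trans (hN n hn) hk


lemma tendsto_nat_sqrt_atTop : Tendsto Nat.sqrt atTop atTop := by
  refine tendsto_atTop_atTop.2 fun b => ⟨b * b, fun a hab => Nat.le_sqrt.2 hab⟩

lemma slln_L2 {Ω : Type*} [MeasurableSpace Ω] (μ : Measure Ω) [IsProbabilityMeasure μ]
    (Z : ℕ → Ω → ℝ) (C : ℝ)
    (hindep : iIndepFun Z μ)
    (h2 : ∀ i, MemLp (Z i) 2 μ)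
    (hvar : ∀ i, variance (Z i) μ ≤ C) :
    ∀ᵐ ω ∂μ, Tendsto
      (fun n : ℕ => (n : ℝ)⁻¹ * ∑ i ∈ Finset.range n, (Z i ω - ∫ x, Z i x ∂μ))
      atTop (nhds 0) := by
  have hC0 : 0 ≤ C := le_trans (variance_nonneg _ _) (hvar 0)
  set m : ℕ → ℝ := fun i => ∫ x, Z i x ∂μ with hm
  set W : ℕ → Ω → ℝ := fun i ω => Z i ω - m i with hWdef
  have hW2 : ∀ i, MemLp (W i) 2 μ := fun i => (h2 i).sub (memLp_const (m i))
  have hWmean : ∀ i, ∫ x, W i x ∂μ = 0 := by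
    intro i
    rw [hWdef]
    simp only
    rw [integral_sub ((h2 i).integrable one_le_two) (integrable_const _)]
    simp [hm]
  have hWindep : iIndepFun W μ :=
    hindep.comp (g := fun i (x : ℝ) => x - m i)
      (fun i => measurable_id.sub measurable_const)
  have hWvar : ∀ i, variance (W i) μ ≤ C := by
    intro i
    have h1 : variance (W i) μ = variance (Z i) μ := by
      rw [variance_eq_sub (hW2 i), hWmean i, variance_eq_integral (h2 i).aemeasurable]
      rw [show (0:ℝ) ^ 2 = 0 by ring, sub_zero]
      rfl
    rw [h1]; exact hvar i
  have hWsq : ∀ i, ∫ x, (W i x) ^ 2 ∂μ ≤ C := by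
    intro i
    have h1 := variance_eq_sub (hW2 i)
    rw [hWmean i] at h1
    have h2' : variance (W i) μ = ∫ x, (W i x) ^ 2 ∂μ := by
      rw [h1]; simp
    linarith [hWvar i, h2'.symm.le]
  -- variance of partial sums
  have hvarsum : ∀ t : Finset ℕ, variance (∑ i ∈ t, W i) μ ≤ (t.card : ℝ) * C := by
    intro t
    rw [IndepFun.variance_sum (fun i _ => hW2 i)
      (fun i _ j _ hij => hWindep.indepFun hij)]
    calc ∑ i ∈ t, variance (W i) μ ≤ ∑ _i ∈ t, C := Finset.sum_le_sum fun i _ => hWvar i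
      _ = (t.card : ℝ) * C := by rw [Finset.sum_const, nsmul_eq_mul]
  have hmemsum : ∀ t : Finset ℕ, MemLp (∑ i ∈ t, W i) 2 μ :=
    fun t => memLp_finset_sum' t fun i _ => hW2 i
  have hmeansum : ∀ t : Finset ℕ, ∫ x, (∑ i ∈ t, W i) x ∂μ = 0 := by
    intro t
    simp only [Finset.sum_apply]
    rw [integral_finset_sum t fun i _ => (hW2 i).integrable one_le_two]
    simp [hWmean]
  -- Part 1 : along squares
  have part1 : ∀ᵐ ω ∂μ, Tendsto
      (fun n : ℕ => (((n : ℝ) ^ 2)⁻¹ * ∑ i ∈ Finset.range (n ^ 2), W i ω)) atTop (nhds 0) := by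
    apply aux_tendsto_zero_of_cheb μ _ C hC0
    intro c hc n hn
    have hnpos : (0 : ℝ) < (n : ℝ) ^ 2 := by
      have : (0:ℝ) < (n:ℝ) := by exact_mod_cast hn
      positivity
    have hset : {ω | c ≤ |((n : ℝ) ^ 2)⁻¹ * ∑ i ∈ Finset.range (n ^ 2), W i ω|}
        = {ω | c * (n : ℝ) ^ 2 ≤ |(∑ i ∈ Finset.range (n ^ 2), W i) ω - ∫ x, (∑ i ∈ Finset.range (n ^ 2), W i) x ∂μ|} := by
      ext ω
      rw [hmeansum]
      simp only [Set.mem_setOf_eq, Finset.sum_apply, sub_zero, abs_mul,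
        abs_inv, abs_of_pos hnpos]
      rw [le_inv_mul_iff₀ hnpos, mul_comm]
    rw [hset]
    refine (meas_ge_le_variance_div_sq (hmemsum _) (by positivity)).trans ?_
    apply ENNReal.ofReal_le_ofReal
    have hvb := hvarsum (Finset.range (n ^ 2))
    rw [Finset.card_range] at hvb
    have hv0 := variance_nonneg (∑ i ∈ Finset.range (n ^ 2), W i) μ
    have hcast : ((n ^ 2 : ℕ) : ℝ) = (n : ℝ) ^ 2 := by push_cast; ring
    rw [hcast] at hvb
    rw [div_le_div_iff₀ (by positivity) (by positivity)]
    calc variance (∑ i ∈ Finset.range (n ^ 2), W i) μ * (c ^ 2 * (n : ℝ) ^ 2)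
        ≤ ((n : ℝ) ^ 2 * C) * (c ^ 2 * (n : ℝ) ^ 2) := by
          apply mul_le_mul_of_nonneg_right hvb (by positivity)
      _ = C * (c * (n : ℝ) ^ 2) ^ 2 := by ring
  -- Part 2 : block fluctuations
  set D : ℕ → Ω → ℝ := fun n ω => ∑ i ∈ Finset.Ico (n ^ 2) ((n + 1) ^ 2), |W i ω| with hDdef
  have hD2 : ∀ n, MemLp (D n) 2 μ := by
    intro n
    exact memLp_finset_sum _ fun i _ => (hW2 i).abs
  have hcard : ∀ n : ℕ, (Finset.Ico (n ^ 2) ((n + 1) ^ 2)).card = 2 * n + 1 := by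
    intro n
    rw [Nat.card_Ico]
    ring_nf
    omega
  have hDnonneg : ∀ n ω, 0 ≤ D n ω := fun n ω => Finset.sum_nonneg fun i _ => abs_nonneg _
  have hDsq : ∀ n : ℕ, ∫ x, (D n x) ^ 2 ∂μ ≤ ((2 * n + 1 : ℕ) : ℝ) ^ 2 * C := by
    intro n
    have hpt : ∀ ω, (D n ω) ^ 2
        ≤ ((2 * n + 1 : ℕ) : ℝ) * ∑ i ∈ Finset.Ico (n ^ 2) ((n + 1) ^ 2), (W i ω) ^ 2 := by
      intro ω
      have := sq_sum_le_card_mul_sum_sq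
        (s := Finset.Ico (n ^ 2) ((n + 1) ^ 2)) (f := fun i => |W i ω|)
      rw [hcard] at this
      simpa [sq_abs] using this
    have hint1 : Integrable (fun x => (D n x) ^ 2) μ := (hD2 n).integrable_sq
    have hint2 : Integrable
        (fun x => ((2 * n + 1 : ℕ) : ℝ) * ∑ i ∈ Finset.Ico (n ^ 2) ((n + 1) ^ 2), (W i x) ^ 2) μ := by
      apply Integrable.const_mul
      exact integrable_finset_sum _ fun i _ => (hW2 i).integrable_sq
    calc ∫ x, (D n x) ^ 2 ∂μ
        ≤ ∫ x, ((2 * n + 1 : ℕ) : ℝ) * ∑ i ∈ Finset.Ico (n ^ 2) ((n + 1) ^ 2), (W i x) ^ 2 ∂μ :=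
          integral_mono hint1 hint2 hpt
      _ = ((2 * n + 1 : ℕ) : ℝ) * ∑ i ∈ Finset.Ico (n ^ 2) ((n + 1) ^ 2), ∫ x, (W i x) ^ 2 ∂μ := by
          rw [integral_const_mul, integral_finset_sum _ fun i _ => (hW2 i).integrable_sq]
      _ ≤ ((2 * n + 1 : ℕ) : ℝ) * (((2 * n + 1 : ℕ) : ℝ) * C) := by
          apply mul_le_mul_of_nonneg_left _ (by positivity)
          calc ∑ i ∈ Finset.Ico (n ^ 2) ((n + 1) ^ 2), ∫ x, (W i x) ^ 2 ∂μ
              ≤ ∑ _i ∈ Finset.Ico (n ^ 2) ((n + 1) ^ 2), C := Finset.sum_le_sum fun i _ => hWsq i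
            _ = ((2 * n + 1 : ℕ) : ℝ) * C := by rw [Finset.sum_const, hcard, nsmul_eq_mul]
      _ = ((2 * n + 1 : ℕ) : ℝ) ^ 2 * C := by ring
  have hDmean : ∀ n : ℕ, ∫ x, D n x ∂μ ≤ ((2 * n + 1 : ℕ) : ℝ) * (1 + C) := by
    intro n
    have hpt : ∀ i, ∫ x, |W i x| ∂μ ≤ 1 + C := by
      intro i
      have h1 : ∫ x, |W i x| ∂μ ≤ ∫ x, (1 + (W i x) ^ 2) ∂μ := by
        apply integral_mono ((hW2 i).integrable one_le_two).abs
          ((integrable_const 1).add (hW2 i).integrable_sq)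
        intro x
        simp only [Pi.add_apply]
        nlinarith [sq_nonneg (|W i x| - 1), abs_nonneg (W i x), sq_abs (W i x)]
      rw [integral_add (integrable_const 1) (hW2 i).integrable_sq] at h1
      simp only [integral_const, measure_univ, ENNReal.toReal_one, smul_eq_mul, one_mul, probReal_univ, mul_one] at h1
      linarith [hWsq i]
    calc ∫ x, D n x ∂μ = ∑ i ∈ Finset.Ico (n ^ 2) ((n + 1) ^ 2), ∫ x, |W i x| ∂μ := by
          rw [hDdef]
          exact integral_finset_sum _ fun i _ => ((hW2 i).integrable one_le_two).abs
      _ ≤ ∑ _i ∈ Finset.Ico (n ^ 2) ((n + 1) ^ 2), (1 + C) := Finset.sum_le_sum fun i _ => hpt i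
      _ = ((2 * n + 1 : ℕ) : ℝ) * (1 + C) := by rw [Finset.sum_const, hcard, nsmul_eq_mul]
  have hDmean0 : ∀ n : ℕ, 0 ≤ ∫ x, D n x ∂μ :=
    fun n => integral_nonneg fun x => hDnonneg n x
  have part2 : ∀ᵐ ω ∂μ, Tendsto
      (fun n : ℕ => ((n : ℝ) ^ 2)⁻¹ * (D n ω - ∫ x, D n x ∂μ)) atTop (nhds 0) := by
    apply aux_tendsto_zero_of_cheb μ _ (9 * C) (by positivity)
    intro c hc n hn
    have hnpos : (0 : ℝ) < (n : ℝ) ^ 2 := by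
      have : (0:ℝ) < (n:ℝ) := by exact_mod_cast hn
      positivity
    have hset : {ω | c ≤ |((n : ℝ) ^ 2)⁻¹ * (D n ω - ∫ x, D n x ∂μ)|}
        = {ω | c * (n : ℝ) ^ 2 ≤ |D n ω - ∫ x, D n x ∂μ|} := by
      ext ω
      simp only [Set.mem_setOf_eq, abs_mul, abs_inv, abs_of_pos hnpos]
      rw [le_inv_mul_iff₀ hnpos, mul_comm]
    rw [hset]
    refine (meas_ge_le_variance_div_sq (hD2 n) (by positivity)).trans ?_
    apply ENNReal.ofReal_le_ofReal
    have hvle : variance (D n) μ ≤ ((2 * n + 1 : ℕ) : ℝ) ^ 2 * C := by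
      refine le_trans (variance_le_expectation_sq (hD2 n).aestronglyMeasurable) ?_
      exact le_trans (le_of_eq (by rfl)) (hDsq n)
    have hb : ((2 * n + 1 : ℕ) : ℝ) ^ 2 ≤ 9 * (n : ℝ) ^ 2 := by
      have h1 : (1 : ℝ) ≤ (n : ℝ) := by exact_mod_cast hn
      push_cast
      nlinarith
    rw [div_le_div_iff₀ (by positivity) (by positivity)]
    have hv0 := variance_nonneg (D n) μ
    calc variance (D n) μ * (c ^ 2 * (n : ℝ) ^ 2)
        ≤ (9 * (n : ℝ) ^ 2 * C) * (c ^ 2 * (n : ℝ) ^ 2) := by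
          apply mul_le_mul_of_nonneg_right _ (by positivity)
          exact le_trans hvle (mul_le_mul_of_nonneg_right hb hC0)
      _ = 9 * C * (c * (n : ℝ) ^ 2) ^ 2 := by ring
  -- deterministic: (n²)⁻¹ E[D n] → 0
  have hdet : Tendsto (fun n : ℕ => ((n : ℝ) ^ 2)⁻¹ * ∫ x, D n x ∂μ) atTop (nhds 0) := by
    apply squeeze_zero' (g := fun n : ℕ => 3 * (1 + C) / (n : ℝ))
    · filter_upwards with n
      positivity
    · filter_upwards [eventually_ge_atTop 1] with n hn
      have h1 : (1 : ℝ) ≤ (n : ℝ) := by exact_mod_cast hn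
      have hb : ((2 * n + 1 : ℕ) : ℝ) ≤ 3 * (n : ℝ) := by push_cast; linarith
      have h2 : ((n : ℝ) ^ 2)⁻¹ * ∫ x, D n x ∂μ ≤ ((n : ℝ) ^ 2)⁻¹ * (3 * (n : ℝ) * (1 + C)) := by
        apply mul_le_mul_of_nonneg_left _ (by positivity)
        exact le_trans (hDmean n) (mul_le_mul_of_nonneg_right hb (by linarith))
      refine le_trans h2 (le_of_eq ?_)
      field_simp
    · have : Tendsto (fun n : ℕ => (n : ℝ)) atTop atTop := tendsto_natCast_atTop_atTop
      simpa using (tendsto_const_nhds.div_atTop this : Tendsto (fun n : ℕ => 3 * (1 + C) / (n : ℝ)) atTop (nhds 0))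
  -- combine
  filter_upwards [part1, part2] with ω h1 h2
  have hR2 : Tendsto (fun n : ℕ => ((n : ℝ) ^ 2)⁻¹ * D n ω) atTop (nhds 0) := by
    have := h2.add hdet
    rw [add_zero] at this
    refine this.congr fun n => ?_
    ring
  have hg : Tendsto (fun n : ℕ =>
      |((n : ℝ) ^ 2)⁻¹ * ∑ i ∈ Finset.range (n ^ 2), W i ω| + ((n : ℝ) ^ 2)⁻¹ * D n ω)
      atTop (nhds 0) := by
    have ha := h1.abs
    rw [abs_zero] at ha
    simpa using ha.add hR2
  have hcomp := hg.comp tendsto_nat_sqrt_atTop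
  apply squeeze_zero_norm' _ hcomp
  filter_upwards [eventually_ge_atTop 1] with k hk
  set n : ℕ := Nat.sqrt k with hn
  have hle : n ^ 2 ≤ k := by
    have := Nat.sqrt_le' k
    simpa [pow_two] using this
  have hlt : k < (n + 1) ^ 2 := by
    have := Nat.lt_succ_sqrt' k
    simpa [pow_two, Nat.succ_eq_add_one] using this
  have hn1 : 1 ≤ n := by
    by_contra h
    interval_cases n <;> omega
  have hkpos : (0 : ℝ) < (k : ℝ) := by exact_mod_cast hk
  have hnpos : (0 : ℝ) < (n : ℝ) ^ 2 := by
    have : (0:ℝ) < (n:ℝ) := by exact_mod_cast hn1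
    positivity
  -- split the sum
  have hsplit : ∑ i ∈ Finset.range k, W i ω
      = ∑ i ∈ Finset.range (n ^ 2), W i ω + ∑ i ∈ Finset.Ico (n ^ 2) k, W i ω := by
    rw [Finset.range_eq_Ico, Finset.range_eq_Ico]
    exact (Finset.sum_Ico_consecutive _ (Nat.zero_le _) hle).symm
  have htail : |∑ i ∈ Finset.Ico (n ^ 2) k, W i ω| ≤ D n ω := by
    refine le_trans (Finset.abs_sum_le_sum_abs _ _) ?_
    apply Finset.sum_le_sum_of_subset_of_nonneg
    · exact Finset.Ico_subset_Ico le_rfl (le_of_lt hlt)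
    · intro i _ _; exact abs_nonneg _
  have hbound : |∑ i ∈ Finset.range k, W i ω|
      ≤ |∑ i ∈ Finset.range (n ^ 2), W i ω| + D n ω := by
    rw [hsplit]
    exact le_trans (abs_add_le _ _) (by linarith [abs_add_le (∑ i ∈ Finset.range (n ^ 2), W i ω) (∑ i ∈ Finset.Ico (n ^ 2) k, W i ω), htail])
  have hinv : (k : ℝ)⁻¹ ≤ ((n : ℝ) ^ 2)⁻¹ := by
    apply inv_anti₀ hnpos
    have : ((n ^ 2 : ℕ) : ℝ) ≤ (k : ℝ) := by exact_mod_cast hle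
    push_cast at this
    linarith
  have hsummand : ∀ i, Z i ω - ∫ x, Z i x ∂μ = W i ω := fun i => rfl
  simp only [hsummand]
  rw [Real.norm_eq_abs, abs_mul, abs_inv, abs_of_pos hkpos]
  calc (k : ℝ)⁻¹ * |∑ i ∈ Finset.range k, W i ω|
      ≤ ((n : ℝ) ^ 2)⁻¹ * (|∑ i ∈ Finset.range (n ^ 2), W i ω| + D n ω) := by
        apply mul_le_mul hinv hbound (abs_nonneg _) (le_of_lt (by positivity))
    _ = |((n : ℝ) ^ 2)⁻¹ * ∑ i ∈ Finset.range (n ^ 2), W i ω| + ((n : ℝ) ^ 2)⁻¹ * D n ω := by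
        rw [abs_mul, abs_inv, abs_of_pos hnpos]
        ring

/-- Strong consistency of the empirical Bayes meta-prior variance estimator:
`τ̂²_N = (N/(N-1))[(1/N)∑ μ̃ᵢ² - ((1/N)∑ μ̃ᵢ)²] - (1/N)∑ σ̃ᵢ² → τ²` almost surely,
under independence and uniformly bounded variances of the families
`(μ̃ᵢ)`, `(μ̃ᵢ²)` and `(σ̃ᵢ²)`. -/
theorem meta_prior_estimator_strong_consistency
    {Ω : Type*} [MeasurableSpace Ω] (μ : Measure Ω) [IsProbabilityMeasure μ]
    (X S : ℕ → Ω → ℝ) (ν τsq ε εX εXsq εS : ℝ)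
    (hindepX : iIndepFun X μ)
    (hindepXsq : iIndepFun (fun i ω => (X i ω) ^ 2) μ)
    (hindepS : iIndepFun S μ)
    (hX2 : ∀ i, MemLp (X i) 2 μ)
    (hXsq2 : ∀ i, MemLp (fun ω => (X i ω) ^ 2) 2 μ)
    (hS2 : ∀ i, MemLp (S i) 2 μ)
    (hmean : ∀ i, ∫ ω, X i ω ∂μ = ν)
    (hvar : ∀ i, variance (X i) μ = τsq + ∫ ω, S i ω ∂μ)
    (hSmean_nonneg : ∀ i, 0 ≤ ∫ ω, S i ω ∂μ)
    (hSmean_bdd : ∀ i, ∫ ω, S i ω ∂μ ≤ ε)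
    (hvarX : ∀ i, variance (X i) μ ≤ εX)
    (hvarXsq : ∀ i, variance (fun ω => (X i ω) ^ 2) μ ≤ εXsq)
    (hvarS : ∀ i, variance (S i) μ ≤ εS) :
    ∀ᵐ ω ∂μ, Tendsto
      (fun n : ℕ =>
        ((n : ℝ) / ((n : ℝ) - 1)) *
            ((n : ℝ)⁻¹ * ∑ i ∈ Finset.range n, (X i ω) ^ 2
              - ((n : ℝ)⁻¹ * ∑ i ∈ Finset.range n, X i ω) ^ 2)
          - (n : ℝ)⁻¹ * ∑ i ∈ Finset.range n, S i ω)
      atTop (nhds τsq) := by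
  have hε0 : 0 ≤ ε := le_trans (hSmean_nonneg 0) (hSmean_bdd 0)
  -- SLLN applications
  have hA := slln_L2 μ X εX hindepX hX2 hvarX
  have hB := slln_L2 μ (fun i ω => (X i ω) ^ 2) εXsq hindepXsq hXsq2 hvarXsq
  have hC := slln_L2 μ S εS hindepS hS2 hvarS
  -- second moments of X
  set EX2 : ℕ → ℝ := fun i => ∫ x, (X i x) ^ 2 ∂μ with hEX2def
  set ES : ℕ → ℝ := fun i => ∫ x, S i x ∂μ with hESdef
  have hEX2 : ∀ i, EX2 i = τsq + ES i + ν ^ 2 := by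
    intro i
    have h1 := variance_eq_sub (hX2 i)
    rw [hvar i, hmean i] at h1
    have h2 : μ[X i ^ 2] = EX2 i := rfl
    rw [h2] at h1
    linarith
  filter_upwards [hA, hB, hC] with ω hAω hBω hCω
  set a : ℕ → ℝ := fun n => (n : ℝ)⁻¹ * ∑ i ∈ Finset.range n, X i ω with hadef
  set b : ℕ → ℝ := fun n => (n : ℝ)⁻¹ * ∑ i ∈ Finset.range n, (X i ω) ^ 2 with hbdef
  set c : ℕ → ℝ := fun n => (n : ℝ)⁻¹ * ∑ i ∈ Finset.range n, S i ω with hcdef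
  -- a → ν
  have ha : Tendsto a atTop (nhds ν) := by
    have heq : (fun n : ℕ => (n : ℝ)⁻¹ * ∑ i ∈ Finset.range n, (X i ω - ∫ x, X i x ∂μ) + ν)
        =ᶠ[atTop] a := by
      filter_upwards [eventually_ge_atTop 1] with n hn
      have hn' : ((n : ℝ)) ≠ 0 := by positivity
      simp only [hadef, hmean, Finset.sum_sub_distrib, Finset.sum_const, Finset.card_range,
        nsmul_eq_mul]
      field_simp
      ring
    have := hAω.add (tendsto_const_nhds (x := ν))
    rw [zero_add] at this
    exact this.congr' heq
  -- b - c → τsq + ν²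
  have hbc : Tendsto (fun n => b n - c n) atTop (nhds (τsq + ν ^ 2)) := by
    have heq : (fun n : ℕ =>
        (n : ℝ)⁻¹ * ∑ i ∈ Finset.range n, ((X i ω) ^ 2 - ∫ x, (X i x) ^ 2 ∂μ)
        - (n : ℝ)⁻¹ * ∑ i ∈ Finset.range n, (S i ω - ∫ x, S i x ∂μ)
        + (τsq + ν ^ 2)) =ᶠ[atTop] (fun n => b n - c n) := by
      filter_upwards [eventually_ge_atTop 1] with n hn
      have hn' : ((n : ℝ)) ≠ 0 := by positivity
      have hsum : ∑ i ∈ Finset.range n, (EX2 i - ES i) = (n : ℝ) * (τsq + ν ^ 2) := by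
        rw [Finset.sum_congr rfl fun i _ => show EX2 i - ES i = τsq + ν ^ 2 by
          rw [hEX2 i]; ring]
        rw [Finset.sum_const, Finset.card_range, nsmul_eq_mul]
      simp only [hbdef, hcdef, Finset.sum_sub_distrib]
      have hEX2sum : ∑ i ∈ Finset.range n, (∫ x, (X i x) ^ 2 ∂μ) = ∑ i ∈ Finset.range n, EX2 i := rfl
      have hESsum : ∑ i ∈ Finset.range n, (∫ x, S i x ∂μ) = ∑ i ∈ Finset.range n, ES i := rfl
      rw [hEX2sum, hESsum]
      have h3 : ∑ i ∈ Finset.range n, EX2 i - ∑ i ∈ Finset.range n, ES i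
          = (n : ℝ) * (τsq + ν ^ 2) := by
        rw [← Finset.sum_sub_distrib]; exact hsum
      field_simp
      linarith [h3]
    have := (hBω.sub hCω).add (tendsto_const_nhds (x := τsq + ν ^ 2))
    rw [sub_zero, zero_add] at this
    exact this.congr' heq
  -- c is eventually bounded
  have hcbdd : ∀ᶠ n in atTop, |c n| ≤ 1 + ε := by
    have h1 : ∀ᶠ (n : ℕ) in atTop,
        |(n : ℝ)⁻¹ * ∑ i ∈ Finset.range n, (S i ω - ∫ x, S i x ∂μ)| < 1 := by
      have := NormedAddCommGroup.tendsto_nhds_zero.mp hCω 1 one_pos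
      simpa only [Real.norm_eq_abs] using this
    filter_upwards [h1, eventually_ge_atTop 1] with n hn1 hn
    have hn' : (0:ℝ) < (n : ℝ) := by positivity
    have hsplit : c n = (n : ℝ)⁻¹ * ∑ i ∈ Finset.range n, (S i ω - ∫ x, S i x ∂μ)
        + (n : ℝ)⁻¹ * ∑ i ∈ Finset.range n, ES i := by
      simp only [hcdef, Finset.sum_sub_distrib]
      have : ∑ i ∈ Finset.range n, (∫ x, S i x ∂μ) = ∑ i ∈ Finset.range n, ES i := rfl
      rw [this]
      ring
    have hES1 : 0 ≤ (n : ℝ)⁻¹ * ∑ i ∈ Finset.range n, ES i := by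
      apply mul_nonneg (by positivity)
      exact Finset.sum_nonneg fun i _ => hSmean_nonneg i
    have hES2 : (n : ℝ)⁻¹ * ∑ i ∈ Finset.range n, ES i ≤ ε := by
      rw [inv_mul_le_iff₀ hn']
      calc ∑ i ∈ Finset.range n, ES i ≤ ∑ _i ∈ Finset.range n, ε :=
            Finset.sum_le_sum fun i _ => hSmean_bdd i
        _ = (n : ℝ) * ε := by rw [Finset.sum_const, Finset.card_range, nsmul_eq_mul]
    rw [hsplit]
    calc |(n : ℝ)⁻¹ * ∑ i ∈ Finset.range n, (S i ω - ∫ x, S i x ∂μ)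
          + (n : ℝ)⁻¹ * ∑ i ∈ Finset.range n, ES i|
        ≤ |(n : ℝ)⁻¹ * ∑ i ∈ Finset.range n, (S i ω - ∫ x, S i x ∂μ)|
          + |(n : ℝ)⁻¹ * ∑ i ∈ Finset.range n, ES i| := abs_add_le _ _
      _ ≤ 1 + ε := by
          apply add_le_add (le_of_lt hn1)
          rw [abs_of_nonneg hES1]; exact hES2
  -- (n-1)⁻¹ → 0
  have hinv : Tendsto (fun n : ℕ => ((n : ℝ) - 1)⁻¹) atTop (nhds 0) := by
    apply tendsto_inv_atTop_zero.comp
    have : Tendsto (fun n : ℕ => (n : ℝ)) atTop atTop := tendsto_natCast_atTop_atTop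
    exact this.atTop_add tendsto_const_nhds
  -- q → 1
  have hq : Tendsto (fun n : ℕ => (n : ℝ) / ((n : ℝ) - 1)) atTop (nhds 1) := by
    have heq : (fun n : ℕ => 1 + ((n : ℝ) - 1)⁻¹)
        =ᶠ[atTop] (fun n : ℕ => (n : ℝ) / ((n : ℝ) - 1)) := by
      filter_upwards [eventually_ge_atTop 2] with n hn
      have h2 : (2:ℝ) ≤ (n : ℝ) := by exact_mod_cast hn
      have hne : (n : ℝ) - 1 ≠ 0 := by linarith
      field_simp
      ring
    have := (tendsto_const_nhds (x := (1:ℝ))).add hinv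
    rw [add_zero] at this
    exact this.congr' heq
  -- (q - 1) * c → 0
  have hqc : Tendsto (fun n : ℕ => ((n : ℝ) / ((n : ℝ) - 1) - 1) * c n) atTop (nhds 0) := by
    apply squeeze_zero_norm' (a := fun n : ℕ => |((n : ℝ) - 1)⁻¹| * (1 + ε))
    · filter_upwards [hcbdd, eventually_ge_atTop 2] with n hn1 hn
      have h2 : (2:ℝ) ≤ (n : ℝ) := by exact_mod_cast hn
      have hne : (n : ℝ) - 1 ≠ 0 := by linarith
      have hq1 : (n : ℝ) / ((n : ℝ) - 1) - 1 = ((n : ℝ) - 1)⁻¹ := by field_simp; ring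
      rw [Real.norm_eq_abs, hq1, abs_mul]
      exact mul_le_mul_of_nonneg_left hn1 (abs_nonneg _)
    · have := (hinv.abs.mul_const (1 + ε))
      simpa using this
  -- final assembly
  have hfinal := (hq.mul (hbc.sub (ha.pow 2))).add hqc
  have hval : 1 * ((τsq + ν ^ 2) - ν ^ 2) + 0 = τsq := by ring
  rw [hval] at hfinal
  refine hfinal.congr fun n => ?_
  simp only [hadef, hbdef, hcdef]
  ring
end
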